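/- For every word w and every k ∈ {1,…,n}: B^c(w) is the enlargement of B(w), and, writing b = B(w), the composite C-matrix satisfies the closed-form recursion C^c(w·k)_{(i,l),(j,m)} = −C^c(w)_{(i,l),(k,m)} if j = k, and C^c(w·k)_{(i,l),(j,m)} = C^c(w)_{(i,l),(j,m)} + Σ_{p=1}^{r_k} ( C^c(w)_{(i,l),(k,p)}[b_{kj}]_+ + [−C^c(w)_{(i,l),(k,p)}]_+ b_{kj} ) if j ≠ k. -/

import Mathlib

/-- `[x]₊ = max(x,0)`. -/
def intPos (x : ℤ) : ℤ := max x 0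

/-- The index set `D = {(i,l) : 1 ≤ i ≤ n, 1 ≤ l ≤ r i}`. -/
abbrev DIdx (n : ℕ) (r : Fin n → ℕ) := Σ i : Fin n, Fin (r i)

/-- Ordinary matrix mutation of a `D × D` integer matrix in direction `p`. -/
def matMut {n : ℕ} {r : Fin n → ℕ} (M : DIdx n r → DIdx n r → ℤ) (p : DIdx n r) :
    DIdx n r → DIdx n r → ℤ :=
  fun d e =>
    if d = p ∨ e = p then -M d e
    else M d e + M d p * intPos (M p e) + intPos (-(M d p)) * M p e

/-- Generalized matrix mutation `μ^r_k` of an `n × n` integer matrix. -/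
def genMut {n : ℕ} (r : Fin n → ℕ) (B : Matrix (Fin n) (Fin n) ℤ) (k : Fin n) :
    Matrix (Fin n) (Fin n) ℤ :=
  Matrix.of fun i j =>
    if i = k ∨ j = k then -B i j
    else B i j + (r k : ℤ) * (B i k * intPos (B k j) + intPos (-(B i k)) * B k j)

/-- The enlargement of an `n × n` integer matrix `B`. -/
def enlarge {n : ℕ} (r : Fin n → ℕ) (B : Matrix (Fin n) (Fin n) ℤ) :
    DIdx n r → DIdx n r → ℤ :=
  fun d e => B d.1 e.1

/-- The identity `D × D` matrix. -/
def idMat {n : ℕ} {r : Fin n → ℕ} : DIdx n r → DIdx n r → ℤ :=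
  fun d e => if d = e then 1 else 0

/-- One mutation step for the triple `(B̂, Ĉ, Ĝ)` in direction `p ∈ D`; `E0 = B̂(∅)`. -/
def hatStep {n : ℕ} {r : Fin n → ℕ} (E0 : DIdx n r → DIdx n r → ℤ)
    (st : (DIdx n r → DIdx n r → ℤ) × (DIdx n r → DIdx n r → ℤ) × (DIdx n r → DIdx n r → ℤ))
    (p : DIdx n r) :
    (DIdx n r → DIdx n r → ℤ) × (DIdx n r → DIdx n r → ℤ) × (DIdx n r → DIdx n r → ℤ) :=
  (matMut st.1 p,
   fun d e =>
     if e = p then -(st.2.1 d p)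
     else st.2.1 d e + st.2.1 d p * intPos (st.1 p e) + intPos (-(st.2.1 d p)) * st.1 p e,
   fun d e =>
     if e = p then
       -(st.2.2 d p) + ∑ a : DIdx n r,
         (st.2.2 d a * intPos (-(st.1 a p)) - E0 d a * intPos (-(st.2.1 a p)))
     else st.2.2 d e)

/-- The triple `(B̂(v), Ĉ(v), Ĝ(v))` attached to a word `v` over `D`. -/
def hatPat {n : ℕ} (r : Fin n → ℕ) (B₀ : Matrix (Fin n) (Fin n) ℤ) (v : List (DIdx n r)) :
    (DIdx n r → DIdx n r → ℤ) × (DIdx n r → DIdx n r → ℤ) × (DIdx n r → DIdx n r → ℤ) :=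
  v.foldl (hatStep (enlarge r B₀)) (enlarge r B₀, idMat, idMat)

/-- `expand w`: replace each letter `k` of `w` by `(k,1), (k,2), …, (k,r_k)`. -/
def expandWord {n : ℕ} (r : Fin n → ℕ) (w : List (Fin n)) : List (DIdx n r) :=
  w.flatMap fun k => (List.finRange (r k)).map fun l => ⟨k, l⟩

/-- The composite matrices `B^c(w) = B̂(expand w)`, `C^c(w) = Ĉ(expand w)`,
`G^c(w) = Ĝ(expand w)`. -/
def Bc {n : ℕ} (r : Fin n → ℕ) (B₀ : Matrix (Fin n) (Fin n) ℤ) (w : List (Fin n)) :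
    DIdx n r → DIdx n r → ℤ := (hatPat r B₀ (expandWord r w)).1

def Cc {n : ℕ} (r : Fin n → ℕ) (B₀ : Matrix (Fin n) (Fin n) ℤ) (w : List (Fin n)) :
    DIdx n r → DIdx n r → ℤ := (hatPat r B₀ (expandWord r w)).2.1

def Gc {n : ℕ} (r : Fin n → ℕ) (B₀ : Matrix (Fin n) (Fin n) ℤ) (w : List (Fin n)) :
    DIdx n r → DIdx n r → ℤ := (hatPat r B₀ (expandWord r w)).2.2

/-- One mutation step for the triple `(B, C^g, G^g)` in direction `k ∈ {1,…,n}`. -/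
def genStep {n : ℕ} (r : Fin n → ℕ) (B₀ : Matrix (Fin n) (Fin n) ℤ)
    (st : Matrix (Fin n) (Fin n) ℤ × Matrix (Fin n) (Fin n) ℤ × Matrix (Fin n) (Fin n) ℤ)
    (k : Fin n) :
    Matrix (Fin n) (Fin n) ℤ × Matrix (Fin n) (Fin n) ℤ × Matrix (Fin n) (Fin n) ℤ :=
  (genMut r st.1 k,
   Matrix.of fun i j =>
     if j = k then -(st.2.1 i k)
     else st.2.1 i j + (r k : ℤ) * (st.2.1 i k * intPos (st.1 k j)
       + intPos (-(st.2.1 i k)) * st.1 k j),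
   Matrix.of fun i j =>
     if j = k then
       -(st.2.2 i k) + (r k : ℤ) * ∑ a : Fin n,
         (st.2.2 i a * intPos (-(st.1 a k)) - B₀ i a * intPos (-(st.2.1 a k)))
     else st.2.2 i j)

/-- The triple `(B(w), C^g(w), G^g(w))` attached to a word `w` over `{1,…,n}`. -/
def genPat {n : ℕ} (r : Fin n → ℕ) (B₀ : Matrix (Fin n) (Fin n) ℤ) (w : List (Fin n)) :
    Matrix (Fin n) (Fin n) ℤ × Matrix (Fin n) (Fin n) ℤ × Matrix (Fin n) (Fin n) ℤ :=
  w.foldl (genStep r B₀) (B₀, 1, 1)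

/-- The sign `σ_{j;w} = (−1)^{number of occurrences of j in w}`. -/
def sigmaSign {n : ℕ} (w : List (Fin n)) (j : Fin n) : ℤ := (-1) ^ (w.count j)

/-- The Kronecker delta on `D`. -/
def deltaD {n : ℕ} {r : Fin n → ℕ} (d e : DIdx n r) : ℤ := if d = e then 1 else 0


/-! ### Auxiliary lemmas -/

lemma intPos_of_nonneg {x : ℤ} (h : 0 ≤ x) : intPos x = x := max_eq_left h

lemma intPos_of_nonpos {x : ℤ} (h : x ≤ 0) : intPos x = 0 := max_eq_right h

lemma dmk_eq_iff {n : ℕ} {r : Fin n → ℕ} {k : Fin n} {m t : Fin (r k)} :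
    (⟨k, m⟩ : DIdx n r) = ⟨k, t⟩ ↔ m = t := by simp

lemma dmk_ne {n : ℕ} {r : Fin n → ℕ} {i k : Fin n} (h : i ≠ k)
    (l : Fin (r i)) (t : Fin (r k)) : (⟨i, l⟩ : DIdx n r) ≠ ⟨k, t⟩ :=
  fun he => h (congrArg Sigma.fst he)

/-- The state after folding `hatStep` over a block of indices in column `k`. -/
def blockFold {n : ℕ} {r : Fin n → ℕ} (E0 : DIdx n r → DIdx n r → ℤ)
    (B : Matrix (Fin n) (Fin n) ℤ) (C₀ G₀ : DIdx n r → DIdx n r → ℤ)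
    (k : Fin n) (L : List (Fin (r k))) :
    (DIdx n r → DIdx n r → ℤ) × (DIdx n r → DIdx n r → ℤ) × (DIdx n r → DIdx n r → ℤ) :=
  (L.map fun m => (⟨k, m⟩ : DIdx n r)).foldl (hatStep E0) (enlarge r B, C₀, G₀)

lemma blockFold_append {n : ℕ} {r : Fin n → ℕ} (E0 : DIdx n r → DIdx n r → ℤ)
    (B : Matrix (Fin n) (Fin n) ℤ) (C₀ G₀ : DIdx n r → DIdx n r → ℤ)
    (k : Fin n) (L : List (Fin (r k))) (t : Fin (r k)) :
    blockFold E0 B C₀ G₀ k (L ++ [t])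
      = hatStep E0 (blockFold E0 B C₀ G₀ k L) ⟨k, t⟩ := by
  simp [blockFold, List.foldl_append]

lemma block_inv {n : ℕ} {r : Fin n → ℕ} (E0 : DIdx n r → DIdx n r → ℤ)
    (B : Matrix (Fin n) (Fin n) ℤ) (k : Fin n) (hB : B k k = 0)
    (C₀ G₀ : DIdx n r → DIdx n r → ℤ) (L : List (Fin (r k))) (hL : L.Nodup) :
    (∀ m m' : Fin (r k), (blockFold E0 B C₀ G₀ k L).1 ⟨k, m⟩ ⟨k, m'⟩ = 0) ∧
    (∀ (m : Fin (r k)) (j : Fin n), j ≠ k → ∀ l : Fin (r j),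
       (blockFold E0 B C₀ G₀ k L).1 ⟨k, m⟩ ⟨j, l⟩
         = (if m ∈ L then -1 else 1) * B k j) ∧
    (∀ (m : Fin (r k)) (j : Fin n), j ≠ k → ∀ l : Fin (r j),
       (blockFold E0 B C₀ G₀ k L).1 ⟨j, l⟩ ⟨k, m⟩
         = (if m ∈ L then -1 else 1) * B j k) ∧
    (∀ i j : Fin n, i ≠ k → j ≠ k → ∀ (l : Fin (r i)) (m : Fin (r j)),
       (blockFold E0 B C₀ G₀ k L).1 ⟨i, l⟩ ⟨j, m⟩
         = B i j + (L.length : ℤ) *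
             (B i k * intPos (B k j) + intPos (-(B i k)) * B k j)) ∧
    (∀ (d : DIdx n r) (m : Fin (r k)),
       (blockFold E0 B C₀ G₀ k L).2.1 d ⟨k, m⟩
         = (if m ∈ L then -1 else 1) * C₀ d ⟨k, m⟩) ∧
    (∀ (d : DIdx n r) (j : Fin n), j ≠ k → ∀ m : Fin (r j),
       (blockFold E0 B C₀ G₀ k L).2.1 d ⟨j, m⟩
         = C₀ d ⟨j, m⟩ + (L.map fun p => C₀ d ⟨k, p⟩ * intPos (B k j)
             + intPos (-(C₀ d ⟨k, p⟩)) * B k j).sum) := by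
  induction L using List.reverseRecOn with
  | nil =>
      refine ⟨?_, ?_, ?_, ?_, ?_, ?_⟩ <;>
        simp [blockFold, enlarge, hB]
  | append_singleton L' t ih =>
      have hL' : L'.Nodup := (List.nodup_append.mp hL).1
      have ht : t ∉ L' := by
        intro hmem
        exact (List.nodup_append'.mp hL).2.2 hmem (List.mem_singleton_self t)
      obtain ⟨ih1, ih2, ih3, ih4, ih5, ih6⟩ := ih hL'
      rw [blockFold_append]
      set st := blockFold E0 B C₀ G₀ k L' with hst
      refine ⟨?_, ?_, ?_, ?_, ?_, ?_⟩
      · -- clause 1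
        intro m m'
        show matMut st.1 ⟨k, t⟩ ⟨k, m⟩ ⟨k, m'⟩ = 0
        unfold matMut
        split_ifs with h
        · simp [ih1]
        · rw [ih1 m m', ih1 m t, ih1 t m']; simp [intPos]
      · -- clause 2
        intro m j hj l
        show matMut st.1 ⟨k, t⟩ ⟨k, m⟩ ⟨j, l⟩ = _
        unfold matMut
        by_cases hm : m = t
        · subst hm
          rw [if_pos (Or.inl rfl), ih2 m j hj l, if_neg ht]
          simp [List.mem_append]
        · rw [if_neg (by
            rintro (h | h)
            · exact hm (dmk_eq_iff.mp h)
            · exact dmk_ne hj l t h)]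
          rw [ih1 m t, ih2 m j hj l]
          have : m ∈ L' ++ [t] ↔ m ∈ L' := by simp [List.mem_append, hm]
          rw [if_congr this rfl rfl]
          simp [intPos]
      · -- clause 3
        intro m j hj l
        show matMut st.1 ⟨k, t⟩ ⟨j, l⟩ ⟨k, m⟩ = _
        unfold matMut
        by_cases hm : m = t
        · subst hm
          rw [if_pos (Or.inr rfl), ih3 m j hj l, if_neg ht]
          simp [List.mem_append]
        · rw [if_neg (by
            rintro (h | h)
            · exact dmk_ne hj l t h
            · exact hm (dmk_eq_iff.mp h))]
          rw [ih1 t m, ih3 m j hj l]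
          have : m ∈ L' ++ [t] ↔ m ∈ L' := by simp [List.mem_append, hm]
          rw [if_congr this rfl rfl]
          simp [intPos]
      · -- clause 4
        intro i j hi hj l m
        show matMut st.1 ⟨k, t⟩ ⟨i, l⟩ ⟨j, m⟩ = _
        unfold matMut
        rw [if_neg (by
          rintro (h | h)
          · exact dmk_ne hi l t h
          · exact dmk_ne hj m t h)]
        rw [ih4 i j hi hj l m, ih3 t i hi l, ih2 t j hj m, if_neg ht]
        simp only [List.length_append, List.length_singleton]
        push_cast
        ring
      · -- clause 5
        intro dd m
        show (hatStep E0 st ⟨k, t⟩).2.1 dd ⟨k, m⟩ = _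
        unfold hatStep
        by_cases hm : m = t
        · subst hm
          simp only [if_pos rfl]
          rw [ih5 dd m, if_neg ht]
          simp [List.mem_append]
        · simp only [if_neg (fun h => hm (dmk_eq_iff.mp h))]
          rw [ih1 t m, ih5 dd m]
          have : m ∈ L' ++ [t] ↔ m ∈ L' := by simp [List.mem_append, hm]
          rw [if_congr this rfl rfl]
          simp [intPos]
      · -- clause 6
        intro dd j hj m
        show (hatStep E0 st ⟨k, t⟩).2.1 dd ⟨j, m⟩ = _
        unfold hatStep
        simp only [if_neg (dmk_ne hj m t)]
        rw [ih6 dd j hj m, ih5 dd t, ih2 t j hj m, if_neg ht]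
        simp only [List.map_append, List.sum_append, List.map_singleton,
          List.sum_singleton, one_mul]
        ring

lemma diag_zero {n : ℕ} {B : Matrix (Fin n) (Fin n) ℤ} {d : Fin n → ℚ}
    (hd : ∀ i, 0 < d i)
    (h : ∀ i j, d i * (B i j : ℚ) = -(d j * (B j i : ℚ))) (k : Fin n) :
    B k k = 0 := by
  have h1 := h k k
  have h2 : (B k k : ℚ) = 0 := by
    have hdk := hd k
    nlinarith [h1]
  exact_mod_cast h2

lemma sgnLe {a b di dk : ℚ} (hdi : 0 < di) (hdk : 0 < dk)
    (h : di * a = -(dk * b)) (hb : 0 ≤ b) : a ≤ 0 := by nlinarith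

lemma sgnPos {a b di dk : ℚ} (hdi : 0 < di) (hdk : 0 < dk)
    (h : di * a = -(dk * b)) (hb : b < 0) : 0 < a := by nlinarith

lemma genMut_symm {n : ℕ} (r : Fin n → ℕ) (B : Matrix (Fin n) (Fin n) ℤ)
    (k : Fin n) (d : Fin n → ℚ) (hd : ∀ i, 0 < d i)
    (h : ∀ i j, d i * (B i j : ℚ) = -(d j * (B j i : ℚ))) :
    ∀ i j, d i * ((genMut r B k i j : ℤ) : ℚ)
      = -(d j * ((genMut r B k j i : ℤ) : ℚ)) := by
  intro i j
  by_cases hi : i = k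
  · simp only [genMut, Matrix.of_apply]
    rw [if_pos (Or.inl hi), if_pos (Or.inr hi)]
    push_cast
    linear_combination -(h i j)
  · by_cases hj : j = k
    · simp only [genMut, Matrix.of_apply]
      rw [if_pos (Or.inr hj), if_pos (Or.inl hj)]
      push_cast
      linear_combination -(h i j)
    · simp only [genMut, Matrix.of_apply, if_neg (by tauto : ¬(i = k ∨ j = k)),
        if_neg (by tauto : ¬(j = k ∨ i = k))]
      -- sign analysis
      have hik := h i k
      have hjk := h j k
      rcases le_or_gt 0 (B k j) with hkj | hkj <;>
        rcases le_or_gt 0 (B k i) with hki | hki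
      · have h1 : B i k ≤ 0 := by
          have : (B i k : ℚ) ≤ 0 :=
            sgnLe (hd i) (hd k) (h i k)
              (by exact_mod_cast hki)
          exact_mod_cast this
        have h2 : B j k ≤ 0 := by
          have : (B j k : ℚ) ≤ 0 :=
            sgnLe (hd j) (hd k) (h j k)
              (by exact_mod_cast hkj)
          exact_mod_cast this
        rw [intPos_of_nonneg hkj, intPos_of_nonneg hki,
          intPos_of_nonneg (by linarith : (0:ℤ) ≤ -(B i k)),
          intPos_of_nonneg (by linarith : (0:ℤ) ≤ -(B j k))]
        push_cast
        linear_combination h i j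
      · have h1 : 0 < B i k := by
          have : (0:ℚ) < (B i k : ℚ) :=
            sgnPos (hd i) (hd k) (h i k)
              (by exact_mod_cast hki)
          exact_mod_cast this
        have h2 : B j k ≤ 0 := by
          have : (B j k : ℚ) ≤ 0 :=
            sgnLe (hd j) (hd k) (h j k)
              (by exact_mod_cast hkj)
          exact_mod_cast this
        rw [intPos_of_nonneg hkj, intPos_of_nonpos (le_of_lt hki),
          intPos_of_nonpos (by linarith : -(B i k) ≤ 0),
          intPos_of_nonneg (by linarith : (0:ℤ) ≤ -(B j k))]
        push_cast
        linear_combination h i j + (r k : ℚ) * (B k j : ℚ) * h i k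
          - (r k : ℚ) * (B k i : ℚ) * h j k
      · have h1 : B i k ≤ 0 := by
          have : (B i k : ℚ) ≤ 0 :=
            sgnLe (hd i) (hd k) (h i k)
              (by exact_mod_cast hki)
          exact_mod_cast this
        have h2 : 0 < B j k := by
          have : (0:ℚ) < (B j k : ℚ) :=
            sgnPos (hd j) (hd k) (h j k)
              (by exact_mod_cast hkj)
          exact_mod_cast this
        rw [intPos_of_nonpos (le_of_lt hkj), intPos_of_nonneg hki,
          intPos_of_nonneg (by linarith : (0:ℤ) ≤ -(B i k)),
          intPos_of_nonpos (by linarith : -(B j k) ≤ 0)]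
        push_cast
        linear_combination h i j - (r k : ℚ) * (B k j : ℚ) * h i k
          + (r k : ℚ) * (B k i : ℚ) * h j k
      · have h1 : 0 < B i k := by
          have : (0:ℚ) < (B i k : ℚ) :=
            sgnPos (hd i) (hd k) (h i k)
              (by exact_mod_cast hki)
          exact_mod_cast this
        have h2 : 0 < B j k := by
          have : (0:ℚ) < (B j k : ℚ) :=
            sgnPos (hd j) (hd k) (h j k)
              (by exact_mod_cast hkj)
          exact_mod_cast this
        rw [intPos_of_nonpos (le_of_lt hkj), intPos_of_nonpos (le_of_lt hki),
          intPos_of_nonpos (by linarith : -(B i k) ≤ 0),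
          intPos_of_nonpos (by linarith : -(B j k) ≤ 0)]
        push_cast
        linear_combination h i j

lemma expandWord_append_singleton {n : ℕ} (r : Fin n → ℕ) (w : List (Fin n))
    (k : Fin n) :
    expandWord r (w ++ [k])
      = expandWord r w ++ (List.finRange (r k)).map (fun m => (⟨k, m⟩ : DIdx n r)) := by
  simp [expandWord]

lemma hatPat_append_singleton {n : ℕ} (r : Fin n → ℕ)
    (B₀ : Matrix (Fin n) (Fin n) ℤ) (w : List (Fin n)) (k : Fin n) :
    hatPat r B₀ (expandWord r (w ++ [k]))
      = ((List.finRange (r k)).map (fun m => (⟨k, m⟩ : DIdx n r))).foldl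
          (hatStep (enlarge r B₀)) (hatPat r B₀ (expandWord r w)) := by
  rw [expandWord_append_singleton]
  simp [hatPat, List.foldl_append]

lemma genPat_append_singleton {n : ℕ} (r : Fin n → ℕ)
    (B₀ : Matrix (Fin n) (Fin n) ℤ) (w : List (Fin n)) (k : Fin n) :
    genPat r B₀ (w ++ [k]) = genStep r B₀ (genPat r B₀ w) k := by
  simp [genPat, List.foldl_append]

lemma main_inv {n : ℕ} (r : Fin n → ℕ) (B₀ : Matrix (Fin n) (Fin n) ℤ)
    (d : Fin n → ℚ) (hd : ∀ i, 0 < d i)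
    (h₀ : ∀ i j, d i * (B₀ i j : ℚ) = -(d j * (B₀ j i : ℚ))) (w : List (Fin n)) :
    (hatPat r B₀ (expandWord r w)).1 = enlarge r (genPat r B₀ w).1 ∧
    (∀ i j, d i * (((genPat r B₀ w).1 i j : ℤ) : ℚ)
      = -(d j * (((genPat r B₀ w).1 j i : ℤ) : ℚ))) := by
  induction w using List.reverseRecOn with
  | nil => exact ⟨rfl, h₀⟩
  | append_singleton w k ih =>
      obtain ⟨ihB, ihS⟩ := ih
      set Bw := (genPat r B₀ w).1 with hBw
      have hkk : Bw k k = 0 := diag_zero hd ihS k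
      have hstate : hatPat r B₀ (expandWord r w)
          = (enlarge r Bw, (hatPat r B₀ (expandWord r w)).2.1,
             (hatPat r B₀ (expandWord r w)).2.2) := by
        rw [← ihB]
      have hfold : hatPat r B₀ (expandWord r (w ++ [k]))
          = blockFold (enlarge r B₀) Bw (hatPat r B₀ (expandWord r w)).2.1
              (hatPat r B₀ (expandWord r w)).2.2 k (List.finRange (r k)) := by
        rw [hatPat_append_singleton, hstate]
        rfl
      obtain ⟨c1, c2, c3, c4, c5, c6⟩ :=
        block_inv (enlarge r B₀) Bw k hkk (hatPat r B₀ (expandWord r w)).2.1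
          (hatPat r B₀ (expandWord r w)).2.2 (List.finRange (r k))
          (List.nodup_finRange (r k))
      have hgen : (genPat r B₀ (w ++ [k])).1 = genMut r Bw k := by
        rw [genPat_append_singleton]; rfl
      constructor
      · rw [hfold, hgen]
        funext de ee
        obtain ⟨i, l⟩ := de
        obtain ⟨j, m⟩ := ee
        show _ = genMut r Bw k i j
        by_cases hi : i = k
        · subst hi
          by_cases hj : j = i
          · subst hj
            rw [c1 l m]
            simp [genMut, hkk]
          · rw [c2 l j hj m]
            simp [genMut, List.mem_finRange]
        · by_cases hj : j = k
          · subst hj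
            rw [c3 m i hi l]
            simp [genMut, List.mem_finRange]
          · rw [c4 i j hi hj l m]
            simp only [genMut, Matrix.of_apply, if_neg (by tauto : ¬(i = k ∨ j = k)),
              List.length_finRange]
      · rw [hgen]
        exact genMut_symm r Bw k d hd ihS

/-- `B^c(w)` is the enlargement of `B(w)`, and the composite `C`-matrix
satisfies the closed-form recursion in terms of `b = B(w)`. -/
theorem Bc_eq_enlargement_and_Cc_recursion {n : ℕ} (hn : 1 ≤ n) (r : Fin n → ℕ)
    (hr : ∀ i, 1 ≤ r i) (B₀ : Matrix (Fin n) (Fin n) ℤ)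
    (hskew : ∃ d : Fin n → ℚ, (∀ i, 0 < d i) ∧
      ∀ i j, d i * (B₀ i j : ℚ) = -(d j * (B₀ j i : ℚ)))
    (w : List (Fin n)) (k : Fin n) :
    Bc r B₀ w = enlarge r (genPat r B₀ w).1 ∧
    (∀ (i : Fin n) (l : Fin (r i)) (m : Fin (r k)),
      Cc r B₀ (w ++ [k]) ⟨i, l⟩ ⟨k, m⟩ = -(Cc r B₀ w ⟨i, l⟩ ⟨k, m⟩)) ∧
    (∀ (i j : Fin n), j ≠ k → ∀ (l : Fin (r i)) (m : Fin (r j)),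
      Cc r B₀ (w ++ [k]) ⟨i, l⟩ ⟨j, m⟩
        = Cc r B₀ w ⟨i, l⟩ ⟨j, m⟩ + ∑ p : Fin (r k),
            (Cc r B₀ w ⟨i, l⟩ ⟨k, p⟩ * intPos ((genPat r B₀ w).1 k j)
              + intPos (-(Cc r B₀ w ⟨i, l⟩ ⟨k, p⟩)) * (genPat r B₀ w).1 k j)) := by
  obtain ⟨d, hd, h₀⟩ := hskew
  obtain ⟨hB, hS⟩ := main_inv r B₀ d hd h₀ w
  have hkk : (genPat r B₀ w).1 k k = 0 := diag_zero hd hS k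
  have hfold : hatPat r B₀ (expandWord r (w ++ [k]))
      = blockFold (enlarge r B₀) (genPat r B₀ w).1
          (hatPat r B₀ (expandWord r w)).2.1
          (hatPat r B₀ (expandWord r w)).2.2 k (List.finRange (r k)) := by
    rw [hatPat_append_singleton]
    rw [show hatPat r B₀ (expandWord r w)
        = (enlarge r (genPat r B₀ w).1, (hatPat r B₀ (expandWord r w)).2.1,
           (hatPat r B₀ (expandWord r w)).2.2) from by rw [← hB]]
    rfl
  obtain ⟨c1, c2, c3, c4, c5, c6⟩ :=
    block_inv (enlarge r B₀) (genPat r B₀ w).1 k hkk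
      (hatPat r B₀ (expandWord r w)).2.1 (hatPat r B₀ (expandWord r w)).2.2
      (List.finRange (r k)) (List.nodup_finRange (r k))
  refine ⟨hB, ?_, ?_⟩
  · intro i l m
    show (hatPat r B₀ (expandWord r (w ++ [k]))).2.1 ⟨i, l⟩ ⟨k, m⟩ = _
    rw [hfold, c5 ⟨i, l⟩ m]
    simp [List.mem_finRange, Cc]
  · intro i j hj l m
    show (hatPat r B₀ (expandWord r (w ++ [k]))).2.1 ⟨i, l⟩ ⟨j, m⟩ = _
    rw [hfold, c6 ⟨i, l⟩ j hj m, Fin.sum_univ_def]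
    rfl
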